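/- Let n ≥ 1, let σ : ℝⁿ → ℂ be given for |ξ| ≥ 1 by σ(ξ) = |ξ|^{s−n} (log|ξ|)^l where s ∈ ℂ, s ≠ 0, and l is a non-negative integer, and let σ be bounded measurable on |ξ| ≤ 1. Then as R → ∞, ∫_{B(0,R)} σ(ξ) dξ = P(log R) · R^s + C + o(1), where P is a polynomial of degree l (depending on s, l, n) and the constant term is C = ∫_{B(0,1)} σ(ξ) dξ + vol(S^{n−1}) · (−1)^{l+1} l! / s^{l+1}. -/

import Mathlib

open MeasureTheory Metric Filter Polynomial

noncomputable def stmtQ (s : ℂ) : ℕ → Polynomial ℂ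
  | 0 => Polynomial.C s⁻¹
  | l + 1 => Polynomial.C s⁻¹ * (Polynomial.X ^ (l + 1)
      - Polynomial.C ((l : ℂ) + 1) * stmtQ s l)

lemma stmtQ_deriv (s : ℂ) (hs : s ≠ 0) (l : ℕ) :
    (stmtQ s l).derivative = Polynomial.X ^ l - Polynomial.C s * stmtQ s l := by
  have hss : Polynomial.C s * Polynomial.C s⁻¹ = (1 : Polynomial ℂ) := by
    rw [← Polynomial.C_mul, mul_inv_cancel₀ hs, Polynomial.C_1]
  induction l with
  | zero => simp [stmtQ, ← Polynomial.C_mul, mul_inv_cancel₀ hs]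
  | succ l ih =>
    simp only [stmtQ, derivative_mul, derivative_C, derivative_sub, derivative_X_pow,
      ih, zero_mul, zero_add]
    push_cast
    linear_combination (Polynomial.X : Polynomial ℂ) ^ (l + 1) * hss

lemma stmtQ_natDegree_le (s : ℂ) (l : ℕ) : (stmtQ s l).natDegree ≤ l := by
  induction l with
  | zero => simp [stmtQ]
  | succ l ih =>
    refine le_trans (natDegree_mul_le) ?_
    simp only [natDegree_C, zero_add]
    refine le_trans (natDegree_sub_le _ _) ?_
    simp only [natDegree_X_pow, max_le_iff, le_refl, true_and]
    exact le_trans (natDegree_mul_le) (by simp only [natDegree_C, zero_add]; omega)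

lemma stmtQ_coeff (s : ℂ) (l : ℕ) : (stmtQ s l).coeff l = s⁻¹ := by
  induction l with
  | zero => simp [stmtQ]
  | succ l ih =>
    have h0 : (stmtQ s l).coeff (l + 1) = 0 :=
      coeff_eq_zero_of_natDegree_lt (lt_of_le_of_lt (stmtQ_natDegree_le s l) (by omega))
    show (Polynomial.C s⁻¹ * (Polynomial.X ^ (l + 1)
        - Polynomial.C ((l : ℂ) + 1) * stmtQ s l)).coeff (l + 1) = s⁻¹
    rw [coeff_C_mul, coeff_sub, coeff_X_pow, coeff_C_mul, h0]
    simp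

lemma stmtQ_degree (s : ℂ) (hs : s ≠ 0) (l : ℕ) : (stmtQ s l).degree = l := by
  refine degree_eq_of_le_of_coeff_ne_zero ?_ ?_
  · exact le_trans degree_le_natDegree (by exact_mod_cast stmtQ_natDegree_le s l)
  · rw [stmtQ_coeff]; exact inv_ne_zero hs

lemma stmtQ_eval_zero (s : ℂ) (hs : s ≠ 0) (l : ℕ) :
    (stmtQ s l).eval 0 = (-1) ^ l * (Nat.factorial l : ℂ) / s ^ (l + 1) := by
  induction l with
  | zero =>
    simp only [stmtQ, eval_C, pow_zero, one_mul, Nat.factorial_zero, Nat.cast_one, pow_one]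
    rw [inv_eq_one_div]
    norm_num
  | succ l ih =>
    simp only [stmtQ, eval_mul, eval_C, eval_sub, eval_pow, eval_X, ih, Nat.factorial_succ]
    rw [zero_pow (by omega)]
    push_cast
    field_simp
    ring

theorem stmt16 (n : ℕ) (hn : 1 ≤ n) (s : ℂ) (hs : s ≠ 0) (l : ℕ)
    (σ : EuclideanSpace ℝ (Fin n) → ℂ) (hσm : Measurable σ)
    (hσb : ∃ C : ℝ, ∀ ξ : EuclideanSpace ℝ (Fin n), ‖ξ‖ ≤ 1 → ‖σ ξ‖ ≤ C)
    (hσ : ∀ ξ : EuclideanSpace ℝ (Fin n), 1 ≤ ‖ξ‖ →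
      σ ξ = (‖ξ‖ : ℂ) ^ (s - n) * (Real.log ‖ξ‖ : ℂ) ^ l) :
    ∃ P : Polynomial ℂ, P.degree = l ∧
      Tendsto
        (fun R : ℝ =>
          (∫ ξ in Metric.closedBall (0 : EuclideanSpace ℝ (Fin n)) R, σ ξ)
            - P.eval ((Real.log R : ℝ) : ℂ) * (R : ℂ) ^ s
            - ((∫ ξ in Metric.closedBall (0 : EuclideanSpace ℝ (Fin n)) 1, σ ξ)
                + (((volume : Measure (EuclideanSpace ℝ (Fin n))).toSphere
                      Set.univ).toReal : ℂ) *
                    (-1 : ℂ) ^ (l + 1) * (Nat.factorial l : ℂ) / s ^ (l + 1)))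
        atTop (nhds 0) := by
  classical
  have hdim : Module.finrank ℝ (EuclideanSpace ℝ (Fin n)) = n := finrank_euclideanSpace_fin
  haveI : Nontrivial (EuclideanSpace ℝ (Fin n)) := Module.nontrivial_of_finrank_pos (by omega : 0 < Module.finrank ℝ (EuclideanSpace ℝ (Fin n)))
  set μ : Measure (EuclideanSpace ℝ (Fin n)) := volume with hμ
  set A : ℝ := (μ.toSphere Set.univ).toReal with hA
  -- A is positive
  have hAval : A = (n : ℝ) * (μ (ball 0 1)).toReal := by
    rw [hA, Measure.toSphere_apply_univ, hdim, ENNReal.toReal_mul, ENNReal.toReal_natCast]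
  have hApos : 0 < A := by
    rw [hAval]
    have h1 : (0 : ℝ) < (μ (ball (0 : EuclideanSpace ℝ (Fin n)) 1)).toReal :=
      ENNReal.toReal_pos (measure_ball_pos μ 0 one_pos).ne' measure_ball_lt_top.ne
    have hn' : (0:ℝ) < (n:ℝ) := by exact_mod_cast hn
    positivity
  have hAne : ((A : ℂ)) ≠ 0 := by exact_mod_cast hApos.ne'
  set Q : Polynomial ℂ := stmtQ s l with hQ
  refine ⟨Polynomial.C (A : ℂ) * Q, ?_, ?_⟩
  · rw [Polynomial.degree_C_mul hAne, hQ, stmtQ_degree s hs l]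
  · obtain ⟨Cb, hCb⟩ := hσb
    have main : ∀ R : ℝ, 1 ≤ R →
        (∫ ξ in closedBall (0 : EuclideanSpace ℝ (Fin n)) R, σ ξ ∂μ)
          = (Polynomial.C (A : ℂ) * Q).eval ((Real.log R : ℝ) : ℂ) * (R : ℂ) ^ s
            + ((∫ ξ in closedBall (0 : EuclideanSpace ℝ (Fin n)) 1, σ ξ ∂μ)
                + (A : ℂ) * (-1 : ℂ) ^ (l + 1) * (Nat.factorial l : ℂ) / s ^ (l + 1)) := by
      intro R hR
      set g : ℝ → ℂ := fun y => (y : ℂ) ^ (s - (n : ℂ)) * ((Real.log y : ℝ) : ℂ) ^ l with hg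
      set f : ℝ → ℂ := Set.indicator (Set.Icc 1 R) g with hf
      -- splitting of the ball
      have hsplit : closedBall (0 : EuclideanSpace ℝ (Fin n)) R = ball (0 : EuclideanSpace ℝ (Fin n)) 1 ∪ (norm ⁻¹' Set.Icc 1 R) := by
        ext x
        simp only [Set.mem_union, mem_ball_zero_iff, Set.mem_preimage, Set.mem_Icc,
          mem_closedBall_zero_iff]
        constructor
        · intro h
          rcases lt_or_ge ‖x‖ 1 with h1 | h1
          · exact Or.inl h1
          · exact Or.inr ⟨h1, h⟩
        · rintro (h | ⟨h1, h2⟩)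
          · linarith
          · exact h2
      have hmeasann : MeasurableSet (norm ⁻¹' Set.Icc 1 R : Set (EuclideanSpace ℝ (Fin n))) :=
        measurableSet_Icc.preimage measurable_norm
      -- integrability
      have hInt : IntegrableOn σ (closedBall (0 : EuclideanSpace ℝ (Fin n)) R) μ := by
        refine Measure.integrableOn_of_bounded measure_closedBall_lt_top.ne
          hσm.aestronglyMeasurable
          (M := max Cb ((max 1 (R ^ (s.re - n))) * (Real.log R) ^ l)) ?_
        filter_upwards [ae_restrict_mem measurableSet_closedBall] with x hx
        rw [mem_closedBall_zero_iff] at hx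
        rcases le_or_gt ‖x‖ 1 with h1 | h1
        · exact le_trans (hCb x h1) (le_max_left _ _)
        · have h1' : (1 : ℝ) ≤ ‖x‖ := h1.le
          have hx0 : (0 : ℝ) < ‖x‖ := by linarith
          rw [hσ x h1', norm_mul, norm_pow]
          have e1 : ‖((‖x‖ : ℝ) : ℂ) ^ (s - (n : ℂ))‖ = ‖x‖ ^ (s.re - n) := by
            rw [Complex.norm_cpow_eq_rpow_re_of_pos hx0]
            norm_num
          have e2 : ‖((Real.log ‖x‖ : ℝ) : ℂ)‖ = Real.log ‖x‖ := by
            rw [Complex.norm_real, Real.norm_eq_abs,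
              abs_of_nonneg (Real.log_nonneg h1')]
          rw [e1, e2]
          refine le_trans (mul_le_mul ?_ ?_ (pow_nonneg (Real.log_nonneg h1') l) (le_max_of_le_right ?_))
            (le_max_right _ _)
          · rcases le_or_gt 0 (s.re - n) with ha | ha
            · exact le_max_of_le_right (Real.rpow_le_rpow hx0.le hx ha)
            · exact le_max_of_le_left (Real.rpow_le_one_of_one_le_of_nonpos h1' ha.le)
          · exact pow_le_pow_left₀ (Real.log_nonneg h1')
              (Real.log_le_log hx0 hx) l
          · exact Real.rpow_nonneg (by linarith) _
      have hdisj : Disjoint (ball (0 : EuclideanSpace ℝ (Fin n)) 1) (norm ⁻¹' Set.Icc 1 R : Set (EuclideanSpace ℝ (Fin n))) := by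
        rw [Set.disjoint_left]
        intro x hx hx'
        rw [mem_ball_zero_iff] at hx
        exact absurd hx'.1 (by linarith)
      -- annulus integral via polar coordinates
      have hann : (∫ x in (norm ⁻¹' Set.Icc 1 R : Set (EuclideanSpace ℝ (Fin n))), σ x ∂μ)
          = (A : ℂ) * ((Q.eval ((Real.log R : ℝ) : ℂ)) * (R : ℂ) ^ s - Q.eval 0) := by
        have h1 : (∫ x in (norm ⁻¹' Set.Icc 1 R : Set (EuclideanSpace ℝ (Fin n))), σ x ∂μ)
            = ∫ x, f ‖x‖ ∂μ := by
          rw [← integral_indicator hmeasann]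
          congr 1
          funext x
          by_cases hx : ‖x‖ ∈ Set.Icc 1 R
          · rw [Set.indicator_of_mem (show x ∈ norm ⁻¹' Set.Icc 1 R from hx) σ, hf,
              Set.indicator_of_mem hx g, hg]
            exact hσ x hx.1
          · rw [Set.indicator_of_notMem (show x ∉ norm ⁻¹' Set.Icc 1 R from hx) σ, hf,
              Set.indicator_of_notMem hx g]
        have h2 := integral_fun_norm_addHaar μ f
        rw [hdim] at h2
        have h3 : (fun (y : ℝ) => y ^ (n - 1) • f y)
            = Set.indicator (Set.Icc 1 R) (fun y => y ^ (n - 1) • g y) := by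
          funext y
          by_cases hy : y ∈ Set.Icc 1 R <;> simp [hf, hy]
        have h4 : (∫ y in Set.Ioi (0:ℝ), y ^ (n - 1) • f y)
            = ∫ y in (1:ℝ)..R, (y:ℂ) ^ (s - 1) * ((Real.log y : ℝ) : ℂ) ^ l := by
          have hii : Set.Ioi (0:ℝ) ∩ Set.Icc 1 R = Set.Icc 1 R :=
            Set.inter_eq_self_of_subset_right
              (fun y hy => lt_of_lt_of_le one_pos hy.1)
          rw [h3, setIntegral_indicator measurableSet_Icc, hii,
            integral_Icc_eq_integral_Ioc, ← intervalIntegral.integral_of_le hR]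
          refine intervalIntegral.integral_congr ?_
          intro y hy
          rw [Set.uIcc_of_le hR] at hy
          have hy1 : (1:ℝ) ≤ y := hy.1
          have hy0 : (0:ℝ) < y := by linarith
          have hyc : (y:ℂ) ≠ 0 := by exact_mod_cast hy0.ne'
          have hcast : ((n - 1 : ℕ) : ℂ) + (s - n) = s - 1 := by
            push_cast [Nat.cast_sub hn]
            ring
          rw [hg]
          show y ^ (n - 1) • ((y:ℂ) ^ (s - (n:ℂ)) * ((Real.log y : ℝ) : ℂ) ^ l) = _
          rw [Complex.real_smul, Complex.ofReal_pow, ← Complex.cpow_natCast,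
            ← mul_assoc, ← Complex.cpow_add _ _ hyc, hcast]
        set G : ℝ → ℂ := fun y => Q.eval ((Real.log y : ℝ) : ℂ) * (y:ℂ) ^ s with hG
        have hder : ∀ y ∈ Set.uIcc (1:ℝ) R,
            HasDerivAt G ((y:ℂ) ^ (s - 1) * ((Real.log y : ℝ) : ℂ) ^ l) y := by
          intro y hy
          rw [Set.uIcc_of_le hR] at hy
          have hy1 : (1:ℝ) ≤ y := hy.1
          have hy0 : (0:ℝ) < y := by linarith
          have hy0' : y ≠ 0 := hy0.ne'
          have hyc : (y:ℂ) ≠ 0 := by exact_mod_cast hy0'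
          have hlog : HasDerivAt (fun t : ℝ => ((Real.log t : ℝ) : ℂ))
              (((y⁻¹ : ℝ) : ℂ)) y := (Real.hasDerivAt_log hy0').ofReal_comp
          have hpoly := Q.hasDerivAt ((Real.log y : ℝ) : ℂ)
          have hcomp := HasDerivAt.scomp (x := y) hpoly hlog
          have hcpow : HasDerivAt (fun t : ℝ => (t:ℂ) ^ s) (s * (y:ℂ) ^ (s - 1)) y := by
            have hr : s - 1 ≠ -1 := by
              intro h
              exact hs (by linear_combination h)
            have hh := (hasDerivAt_ofReal_cpow_const' hy0' hr).const_mul s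
            rw [sub_add_cancel] at hh
            have heq : (fun t : ℝ => s * ((t:ℂ) ^ s / s)) = fun t : ℝ => (t:ℂ) ^ s := by
              funext t
              rw [mul_comm, div_mul_cancel₀ _ hs]
            rwa [heq] at hh
          have hmul := hcomp.mul hcpow
          convert hmul using 1
          case e'_4 => rfl
          case e'_8 => rfl
          have hQd : Polynomial.eval ((Real.log y : ℝ) : ℂ) Q.derivative
              = ((Real.log y : ℝ) : ℂ) ^ l
                - s * Polynomial.eval ((Real.log y : ℝ) : ℂ) Q := by
            rw [hQ, stmtQ_deriv s hs l]
            simp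
          have hinv : ((y:ℂ))⁻¹ * (y:ℂ) = 1 := inv_mul_cancel₀ hyc
          have hys : (y:ℂ) ^ s = (y:ℂ) * (y:ℂ) ^ (s - 1) := by
            conv_lhs => rw [show s = 1 + (s - 1) by ring]
            rw [Complex.cpow_add _ _ hyc, Complex.cpow_one]
          rw [Function.comp_def, smul_eq_mul, hQd, Complex.ofReal_inv, hys]
          linear_combination (-(((Real.log y : ℝ) : ℂ) ^ l
            - s * Polynomial.eval ((Real.log y : ℝ) : ℂ) Q) * ((y:ℂ) ^ (s - 1))) * hinv
        have hsub : Set.uIcc (1:ℝ) R ⊆ {t : ℝ | t ≠ 0} := by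
          rw [Set.uIcc_of_le hR]
          intro y hy
          have : (0:ℝ) < y := lt_of_lt_of_le one_pos hy.1
          exact this.ne'
        have hint : IntervalIntegrable
            (fun y : ℝ => (y:ℂ) ^ (s - 1) * ((Real.log y : ℝ) : ℂ) ^ l) volume 1 R := by
          refine ContinuousOn.intervalIntegrable (ContinuousOn.mul ?_ ?_)
          · intro y hy
            exact (Complex.continuousAt_ofReal_cpow_const y (s - 1)
              (Or.inr (hsub hy))).continuousWithinAt
          · exact (Complex.continuous_ofReal.comp_continuousOn
              (Real.continuousOn_log.mono hsub)).pow l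
        have h5 := intervalIntegral.integral_eq_sub_of_hasDerivAt hder hint
        have hG1 : G 1 = Q.eval 0 := by
          simp [hG, Real.log_one, Complex.one_cpow]
        rw [h1, h2, h4, h5, hG1, hAval]
        rw [← Nat.cast_smul_eq_nsmul ℝ, smul_smul, Complex.real_smul]
        rfl
      -- ball vs closed ball
      have hball : (∫ x in ball (0 : EuclideanSpace ℝ (Fin n)) 1, σ x ∂μ) = ∫ x in closedBall (0 : EuclideanSpace ℝ (Fin n)) 1, σ x ∂μ := by
        refine setIntegral_congr_set ?_
        rw [MeasureTheory.ae_eq_set]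
        constructor
        · simp [Set.diff_eq_empty.mpr ball_subset_closedBall]
        · rw [closedBall_diff_ball]
          exact Measure.addHaar_sphere μ 0 1
      rw [hsplit, setIntegral_union hdisj hmeasann
        (hInt.mono_set (by rw [hsplit]; exact Set.subset_union_left))
        (hInt.mono_set (by rw [hsplit]; exact Set.subset_union_right)),
        hann, hball, Polynomial.eval_mul, Polynomial.eval_C,
        stmtQ_eval_zero s hs l]
      ring
    have hev : ∀ᶠ R : ℝ in atTop,
        ((∫ ξ in closedBall (0 : EuclideanSpace ℝ (Fin n)) R, σ ξ ∂μ)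
            - (Polynomial.C (A : ℂ) * Q).eval ((Real.log R : ℝ) : ℂ) * (R : ℂ) ^ s
            - ((∫ ξ in closedBall (0 : EuclideanSpace ℝ (Fin n)) 1, σ ξ ∂μ)
                + (A : ℂ) * (-1 : ℂ) ^ (l + 1) * (Nat.factorial l : ℂ) / s ^ (l + 1)))
          = (0 : ℂ) := by
      filter_upwards [eventually_ge_atTop (1 : ℝ)] with R hR
      rw [main R hR]
      ring
    exact tendsto_const_nhds.congr' (by filter_upwards [hev] with R h using h.symm)
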